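/- Let ẑ ∈ BV_loc(ℝ) (equivalently, assume ẑ : ℝ → ℝ is such that s ↦ ẑ(s) + |P| s is nondecreasing, where P ∈ ℝ^N \ {0} is fixed), and define z(x,t) = ẑ(⟨P,x⟩/|P| + t). If z is ℤ^{N+1}-periodic and ẑ is not constant, then P/|P| is a rational vector, i.e., P/|P| ∈ ℚ^N. -/

import Mathlib

open RealInnerProductSpace

theorem stmt8 (N : ℕ) (P : EuclideanSpace ℝ (Fin N)) (hP : P ≠ 0) (zh : ℝ → ℝ)
    (hmono : Monotone fun s => zh s + ‖P‖ * s)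
    (hper : ∀ (x : EuclideanSpace ℝ (Fin N)) (t : ℝ) (k : Fin N → ℤ) (m : ℤ),
      zh (⟪P, x + (WithLp.equiv 2 (Fin N → ℝ)).symm (fun i => (k i : ℝ))⟫ / ‖P‖ + (t + m)) =
        zh (⟪P, x⟫ / ‖P‖ + t))
    (hnc : ∃ s₁ s₂, zh s₁ ≠ zh s₂) :
    ∀ i, ∃ r : ℚ, P i / ‖P‖ = r := by
  have hPn : (0:ℝ) < ‖P‖ := norm_pos_iff.mpr hP
  set G : AddSubgroup ℝ :=
    { carrier := {x | ∀ s, zh (s + x) = zh s}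
      zero_mem' := fun s => by simp
      add_mem' := fun {x y} hx hy s => by
        rw [← add_assoc, hy (s + x), hx s]
      neg_mem' := fun {x} hx s => by
        have h := hx (s + -x)
        simp only [neg_add_cancel_right] at h
        exact h.symm } with hG
  have memG : ∀ x : ℝ, x ∈ G ↔ ∀ s, zh (s + x) = zh s := fun x => Iff.rfl
  have key : ∀ (k : Fin N → ℤ) (m : ℤ),
      ((⟪P, (WithLp.equiv 2 (Fin N → ℝ)).symm (fun i => (k i : ℝ))⟫ / ‖P‖ + m) : ℝ) ∈ G := by
    intro k m
    rw [memG]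
    intro s
    have h := hper 0 s k m
    simp only [zero_add, inner_zero_right, zero_div] at h
    rw [← h]
    congr 1
    ring
  have h1 : (1:ℝ) ∈ G := by
    have h := key 0 1
    have hz : ((WithLp.equiv 2 (Fin N → ℝ)).symm (fun i => (((0 : Fin N → ℤ)) i : ℝ))) = 0 := by
      simp only [Pi.zero_apply, Int.cast_zero]; rfl
    rw [hz] at h
    simpa using h
  have contra : ∀ s₁ s₂ : ℝ, zh s₁ < zh s₂ → ¬ Dense (G : Set ℝ) := by
    intro s₁ s₂ hlt hd
    have hδpos : 0 < (zh s₂ - zh s₁) / ‖P‖ := div_pos (by linarith) hPn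
    obtain ⟨g, hgG, hg⟩ := hd.exists_mem_open isOpen_Ioo
      (Set.nonempty_Ioo.mpr (by linarith : s₂ - s₁ < s₂ - s₁ + (zh s₂ - zh s₁) / ‖P‖))
    obtain ⟨hg1, hg2⟩ := hg
    have hm := hmono (le_of_lt (by linarith : s₂ < s₁ + g))
    simp only at hm
    rw [(memG g).mp hgG s₁] at hm
    have hdm : (zh s₂ - zh s₁) / ‖P‖ * ‖P‖ = zh s₂ - zh s₁ := div_mul_cancel₀ _ hPn.ne'
    nlinarith [hm, hg2, hPn]
  intro i
  have hα : (P i / ‖P‖ : ℝ) ∈ G := by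
    have h := key (Pi.single i 1) 0
    have hv : ((WithLp.equiv 2 (Fin N → ℝ)).symm (fun j => ((Pi.single i 1 : Fin N → ℤ) j : ℝ)))
        = EuclideanSpace.single i (1:ℝ) := by
      ext j
      by_cases hj : j = i <;> simp [hj, Pi.single_apply, EuclideanSpace.single_apply]
    rw [hv] at h
    simpa [EuclideanSpace.inner_single_right] using h
  rcases AddSubgroup.dense_or_cyclic G with hd | ⟨a, ha⟩
  · obtain ⟨s₁, s₂, hne⟩ := hnc
    rcases hne.lt_or_gt with hlt | hlt
    · exact absurd hd (contra s₁ s₂ hlt)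
    · exact absurd hd (contra s₂ s₁ hlt)
  · rw [ha, AddSubgroup.mem_closure_singleton] at h1 hα
    obtain ⟨n, hn⟩ := h1
    obtain ⟨m, hm⟩ := hα
    have hn0 : (n : ℝ) ≠ 0 := by
      intro h0
      rw [zsmul_eq_mul, h0, zero_mul] at hn
      exact one_ne_zero hn.symm
    refine ⟨(m : ℚ) / (n : ℚ), ?_⟩
    rw [zsmul_eq_mul] at hn hm
    push_cast
    rw [← hm]
    have ha1 : a = 1 / (n:ℝ) := by
      rw [eq_div_iff hn0]
      linear_combination hn
    rw [ha1]
    ring
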